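/- Let A be a Wheeler NFA and α, β, δ ∈ Pref(L(A)) with α ≺ δ ≺ β and I_α = I_β. Then I_α = I_δ. -/

import Mathlib

/-- The co-lexicographic (strict) order on strings. -/
def ListColex {α : Type*} [LinearOrder α] (x y : List α) : Prop :=
  List.Lex (· < ·) x.reverse y.reverse

/-- A Wheeler NFA: an NFA with a linear order on states whose minimum is the initial
state `s`, `s` has no incoming edges, and the two Wheeler properties hold. -/
structure WNFA (α Q : Type*) [LinearOrder α] [LinearOrder Q] where
  δ : Q → α → Set Q
  s : Q
  F : Set Q
  s_min : ∀ q : Q, s ≤ q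
  s_no_incoming : ∀ (u : Q) (a : α), s ∉ δ u a
  wheeler_i : ∀ ⦃u₁ u₂ : Q⦄ ⦃a₁ a₂ : α⦄ ⦃v₁ v₂ : Q⦄,
    v₁ ∈ δ u₁ a₁ → v₂ ∈ δ u₂ a₂ → a₁ < a₂ → v₁ < v₂
  wheeler_ii : ∀ ⦃u₁ u₂ : Q⦄ ⦃a : α⦄ ⦃v₁ v₂ : Q⦄,
    v₁ ∈ δ u₁ a → v₂ ∈ δ u₂ a → u₁ < u₂ → v₁ ≤ v₂

namespace WNFA

variable {α Q : Type*} [LinearOrder α] [LinearOrder Q]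

/-- The transition function extended to strings. -/
def δStar (A : WNFA α Q) : Q → List α → Set Q
  | q, [] => {q}
  | q, a :: w => {p | ∃ v ∈ A.δ q a, p ∈ A.δStar v w}

/-- The language accepted by the automaton. -/
def lang (A : WNFA α Q) : Set (List α) := {w | ∃ q ∈ A.F, q ∈ A.δStar A.s w}

/-- The set of prefixes of accepted words: the strings the automaton can read. -/
def Pref (A : WNFA α Q) : Set (List α) := {x | ∃ y, x ++ y ∈ A.lang}

/-- `I_u`: the set of readable strings reaching state `u` from the initial state. -/
def Iu (A : WNFA α Q) (u : Q) : Set (List α) := {x | x ∈ A.Pref ∧ u ∈ A.δStar A.s x}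

end WNFA


namespace WNFA

variable {α Q : Type*} [LinearOrder α] [LinearOrder Q]

lemma mem_δStar_append (A : WNFA α Q) (w₁ w₂ : List α) (q p : Q) :
    p ∈ A.δStar q (w₁ ++ w₂) ↔ ∃ r ∈ A.δStar q w₁, p ∈ A.δStar r w₂ := by
  induction w₁ generalizing q with
  | nil => simp [δStar]
  | cons a w ih =>
    simp only [List.cons_append, δStar, Set.mem_setOf_eq]
    constructor
    · rintro ⟨v, hv, hp⟩
      obtain ⟨r, hr, hp⟩ := (ih v).mp hp
      exact ⟨r, ⟨v, hv, hr⟩, hp⟩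
    · rintro ⟨r, ⟨v, hv, hr⟩, hp⟩
      exact ⟨v, hv, (ih v).mpr ⟨r, hr, hp⟩⟩

lemma key_rev (A : WNFA α Q) : ∀ {xr yr : List α}, List.Lex (· < ·) xr yr →
    ∀ {u v : Q}, u ∈ A.δStar A.s xr.reverse → v ∈ A.δStar A.s yr.reverse →
    u ≤ v ∨ (u ∈ A.δStar A.s yr.reverse ∧ v ∈ A.δStar A.s xr.reverse) := by
  intro xr yr h
  induction h with
  | nil =>
    intro u v hu hv
    simp only [List.reverse_nil, δStar, Set.mem_singleton_iff] at hu
    subst hu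
    exact Or.inl (A.s_min v)
  | @cons a l₁ l₂ h ih =>
    intro u v hu hv
    rw [List.reverse_cons, mem_δStar_append] at hu hv ⊢
    rw [List.reverse_cons, mem_δStar_append]
    obtain ⟨u', hu', hu⟩ := hu
    obtain ⟨v', hv', hv⟩ := hv
    simp only [δStar, Set.mem_setOf_eq, Set.mem_singleton_iff] at hu hv
    obtain ⟨w1, hw1, rfl⟩ := hu
    obtain ⟨w2, hw2, rfl⟩ := hv
    rcases ih hu' hv' with h1 | ⟨h2, h3⟩
    · rcases lt_or_eq_of_le h1 with h1 | rfl
      · exact Or.inl (A.wheeler_ii hw1 hw2 h1)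
      · refine Or.inr ⟨⟨u', hv', ?_⟩, ⟨u', hu', ?_⟩⟩ <;>
          simp [δStar, *]
    · refine Or.inr ⟨⟨u', h2, ?_⟩, ⟨v', h3, ?_⟩⟩ <;> simp [δStar, *]
  | @rel a b l₁ l₂ hab =>
    intro u v hu hv
    rw [List.reverse_cons, mem_δStar_append] at hu hv
    obtain ⟨u', hu', hu⟩ := hu
    obtain ⟨v', hv', hv⟩ := hv
    simp only [δStar, Set.mem_setOf_eq, Set.mem_singleton_iff] at hu hv
    obtain ⟨w1, hw1, rfl⟩ := hu
    obtain ⟨w2, hw2, rfl⟩ := hv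
    exact Or.inl (le_of_lt (A.wheeler_i hw1 hw2 hab))

lemma key (A : WNFA α Q) {x y : List α} (h : ListColex x y) {u v : Q}
    (hu : u ∈ A.δStar A.s x) (hv : v ∈ A.δStar A.s y) :
    u ≤ v ∨ (u ∈ A.δStar A.s y ∧ v ∈ A.δStar A.s x) := by
  have hu' : u ∈ A.δStar A.s x.reverse.reverse := by rwa [List.reverse_reverse]
  have hv' : v ∈ A.δStar A.s y.reverse.reverse := by rwa [List.reverse_reverse]
  have := A.key_rev h hu' hv'
  simpa [List.reverse_reverse] using this

lemma nonempty_of_pref (A : WNFA α Q) {x : List α} (hx : x ∈ A.Pref) :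
    ∃ p, p ∈ A.δStar A.s x := by
  obtain ⟨z, q, hqF, hq⟩ := hx
  obtain ⟨r, hr, -⟩ := (A.mem_δStar_append x z A.s q).mp hq
  exact ⟨r, hr⟩

end WNFA

/-- In a Wheeler NFA, if `x ≺ d ≺ y` are readable strings and `I_x = I_y`,
then `I_x = I_d`. -/
theorem Ialpha_eq_of_between {α Q : Type*} [LinearOrder α] [LinearOrder Q]
    (A : WNFA α Q) (x d y : List α)
    (hx : x ∈ A.Pref) (hd : d ∈ A.Pref) (hy : y ∈ A.Pref)
    (hxd : ListColex x d) (hdy : ListColex d y)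
    (hxy : A.δStar A.s x = A.δStar A.s y) :
    A.δStar A.s x = A.δStar A.s d := by
  obtain ⟨p, hp⟩ := A.nonempty_of_pref hd
  obtain ⟨q0, hq0⟩ := A.nonempty_of_pref hx
  ext q
  constructor
  · intro hq
    have hqy : q ∈ A.δStar A.s y := hxy ▸ hq
    rcases A.key hxd hq hp with h1 | ⟨h2, -⟩
    · rcases A.key hdy hp hqy with h2 | ⟨-, h4⟩
      · have : q = p := le_antisymm h1 h2
        exact this ▸ hp
      · exact h4
    · exact h2
  · intro hq
    have hq0y : q0 ∈ A.δStar A.s y := hxy ▸ hq0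
    rcases A.key hxd hq0 hq with h1 | ⟨-, h3⟩
    · rcases A.key hdy hq hq0y with h2 | ⟨h3, -⟩
      · have : q = q0 := le_antisymm h2 h1
        exact this ▸ hq0
      · exact hxy ▸ h3
    · exact h3
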